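/- arXiv:1804.01207 — 4 statements merged into one kernel-verified Lean document; each statement's English description precedes it below -/
import Mathlib

section
/- (Round trip lemma, part 1) Let N ≥ 1, let A be a finite alphabet, and let C : ZMod N → A be a cycle. For every symbol a in the range of C, the sum of the distances Δ_C(j) over all positions j with C(j) = a equals N; that is, ∑_{j : C(j) = a} Δ_C(j) = N. -/
open Finset

/-- The distance from position `j` to the next occurrence of the same symbol:
the least positive `d` with `C (j + d) = C j`. -/
noncomputable def cycleDist {N : ℕ} {A : Type*} (C : ZMod N → A) (j : ZMod N) : ℕ :=
  sInf {d : ℕ | 0 < d ∧ C (j + (d : ZMod N)) = C j}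

/-- A cycle is admissible for multiplicities `m` if every fiber has the prescribed size. -/
def Admissible {N : ℕ} [NeZero N] {A : Type*} [Fintype A] [DecidableEq A]
    (m : A → ℕ) (C : ZMod N → A) : Prop :=
  ∀ a : A, (Finset.univ.filter (fun j => C j = a)).card = m a

/-- The mean of a cycle. -/
noncomputable def cycleMean {N : ℕ} [NeZero N] {A : Type*} (C : ZMod N → A) : ℚ :=
  (∑ j : ZMod N, (cycleDist C j : ℚ)) / N

/-- The second (raw) moment of a cycle. -/
noncomputable def cycleMoment2 {N : ℕ} [NeZero N] {A : Type*} (C : ZMod N → A) : ℚ :=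
  (∑ j : ZMod N, (cycleDist C j : ℚ) ^ 2) / N

/-- The variance of a cycle. -/
noncomputable def cycleVariance {N : ℕ} [NeZero N] {A : Type*} (C : ZMod N → A) : ℚ :=
  (∑ j : ZMod N, ((cycleDist C j : ℚ) - cycleMean C) ^ 2) / N

/-- Round trip lemma, part 1: for every symbol attained by the cycle, the distances over
its instances sum to `N`. -/
theorem round_trip_part1 {N : ℕ} [NeZero N] {A : Type*} [Fintype A] [DecidableEq A]
    (C : ZMod N → A) (a : A) (ha : a ∈ Set.range C) :
    ∑ j ∈ Finset.univ.filter (fun j => C j = a), cycleDist C j = N := by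
  classical
  obtain ⟨j0, hj0⟩ := ha
  have hNpos : 0 < N := Nat.pos_of_ne_zero (NeZero.ne N)
  have hspec : ∀ j : ZMod N, 0 < cycleDist C j ∧ C (j + (cycleDist C j : ZMod N)) = C j := by
    intro j
    exact Nat.sInf_mem (s := {d : ℕ | 0 < d ∧ C (j + (d : ZMod N)) = C j})
      ⟨N, hNpos, by simp⟩
  have hmin : ∀ j : ZMod N, ∀ d : ℕ, 0 < d → C (j + (d : ZMod N)) = C j → cycleDist C j ≤ d :=
    fun j d hd hC => Nat.sInf_le ⟨hd, hC⟩
  set S := Finset.univ.filter (fun j => C j = a) with hS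
  have key : (S.sigma (fun j => Finset.Ioc 0 (cycleDist C j))).card
      = (Finset.univ : Finset (ZMod N)).card := by
    apply Finset.card_bij (fun p _ => p.1 + ((p.2 : ℕ) : ZMod N))
    · intro p hp; exact Finset.mem_univ _
    · -- injectivity
      have main : ∀ (j j' : ZMod N) (t t' : ℕ), C j = a → C j' = a →
          0 < t → t ≤ cycleDist C j → 0 < t' → t' ≤ cycleDist C j' →
          j + (t : ZMod N) = j' + (t' : ZMod N) → t ≤ t' → t = t' := by
        intro j j' t t' hj hj' ht0 htd ht'0 ht'd heq hle
        by_contra hne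
        have hlt : t < t' := lt_of_le_of_ne hle hne
        have hcast : ((t' - t : ℕ) : ZMod N) = (t' : ZMod N) - t := by
          rw [Nat.cast_sub hlt.le]
        have hj'eq : j' + ((t' - t : ℕ) : ZMod N) = j := by
          rw [hcast]
          have : j' + ((t' : ZMod N) - t) = (j' + t') - t := by ring
          rw [this, ← heq]; ring
        have : cycleDist C j' ≤ t' - t := by
          apply hmin j' (t' - t) (by omega)
          rw [hj'eq, hj, hj']
        omega
      rintro ⟨j, t⟩ hjt ⟨j', t'⟩ hjt' heq
      simp only [Finset.mem_sigma, hS, Finset.mem_filter, Finset.mem_Ioc,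
        Finset.mem_univ, true_and] at hjt hjt'
      obtain ⟨hja, ht0, htd⟩ := hjt
      obtain ⟨hj'a, ht'0, ht'd⟩ := hjt'
      simp only at heq
      have htt' : t = t' := by
        rcases le_total t t' with h | h
        · exact main j j' t t' hja hj'a ht0 htd ht'0 ht'd heq h
        · exact (main j' j t' t hj'a hja ht'0 ht'd ht0 htd heq.symm h).symm
      subst htt'
      have : j = j' := by
        have := heq
        exact add_right_cancel this
      simp [this]
    · -- surjectivity
      intro k _
      set T : Set ℕ := {d : ℕ | 0 < d ∧ C (k - (d : ZMod N)) = a} with hT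
      have hTne : T.Nonempty := by
        refine ⟨N + (k - j0).val, by omega, ?_⟩
        have : ((N + (k - j0).val : ℕ) : ZMod N) = k - j0 := by
          push_cast
          simp [ZMod.natCast_val, ZMod.cast_id]
        rw [this]
        simpa using hj0
      set t := sInf T with ht
      obtain ⟨ht0, htC⟩ : 0 < t ∧ C (k - (t : ZMod N)) = a := Nat.sInf_mem hTne
      refine ⟨⟨k - (t : ZMod N), t⟩, ?_, by simp⟩
      simp only [Finset.mem_sigma, hS, Finset.mem_filter, Finset.mem_Ioc,
        Finset.mem_univ, true_and]
      refine ⟨htC, ht0, ?_⟩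
      by_contra hgt
      push_neg at hgt
      set d := cycleDist C (k - (t : ZMod N)) with hd
      have hd0 : 0 < d := (hspec _).1
      have hdC : C (k - (t : ZMod N) + (d : ZMod N)) = C (k - (t : ZMod N)) := (hspec _).2
      have hmem : t - d ∈ T := by
        constructor
        · omega
        · have hcast : ((t - d : ℕ) : ZMod N) = (t : ZMod N) - d := by
            rw [Nat.cast_sub hgt.le]
          rw [hcast]
          have : k - ((t : ZMod N) - d) = k - (t : ZMod N) + d := by ring
          rw [this, hdC, htC]
      have := Nat.sInf_le hmem
      omega
  have : ∑ j ∈ S, cycleDist C j = (S.sigma (fun j => Finset.Ioc 0 (cycleDist C j))).card := by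
    rw [Finset.card_sigma]
    simp
  rw [← hS] at *
  rw [this, key]
  simp
end

section
/- (Round trip lemma, part 2: invariance of the mean) Let N ≥ 1, let A be a finite alphabet, and let C : ZMod N → A be a cycle. Then ∑_{j : ZMod N} Δ_C(j) = N · |range C|, where |range C| is the number of distinct symbols attained by C. Equivalently, the mean μ(C) = (1/N)·∑_j Δ_C(j) is an integer equal to the number of distinct symbols appearing in the cycle, independently of how the symbols are arranged. -/
open Finset

section aux
variable {N : ℕ} [NeZero N] {A : Type*} (C : ZMod N → A)

lemma cycleDist_spec (j : ZMod N) :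
    0 < cycleDist C j ∧ C (j + (cycleDist C j : ZMod N)) = C j := by
  have h : {d : ℕ | 0 < d ∧ C (j + (d : ZMod N)) = C j}.Nonempty :=
    ⟨N, Nat.pos_of_ne_zero (NeZero.ne N), by simp⟩
  exact Nat.sInf_mem h

lemma cycleDist_le {j : ZMod N} {t : ℕ} (ht : 0 < t) (h : C (j + (t : ZMod N)) = C j) :
    cycleDist C j ≤ t := Nat.sInf_le ⟨ht, h⟩

noncomputable def prevDist (i : ZMod N) (a : A) : ℕ :=
  sInf {t : ℕ | 0 < t ∧ C (i - (t : ZMod N)) = a}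

lemma prevDist_spec {i : ZMod N} {a : A} (ha : ∃ k, C k = a) :
    0 < prevDist C i a ∧ C (i - (prevDist C i a : ZMod N)) = a := by
  obtain ⟨k, hk⟩ := ha
  have h : {t : ℕ | 0 < t ∧ C (i - (t : ZMod N)) = a}.Nonempty := by
    by_cases h : i = k
    · exact ⟨N, Nat.pos_of_ne_zero (NeZero.ne N), by simp [h, hk]⟩
    · refine ⟨(i - k).val, ?_, ?_⟩
      · have : i - k ≠ 0 := sub_ne_zero.mpr h
        exact ZMod.val_pos.mpr this
      · simp [ZMod.natCast_val, ZMod.cast_id, sub_sub_cancel, hk]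
  exact Nat.sInf_mem h

lemma prevDist_le {i : ZMod N} {a : A} {t : ℕ} (ht : 0 < t) (h : C (i - (t : ZMod N)) = a) :
    prevDist C i a ≤ t := Nat.sInf_le ⟨ht, h⟩

/-- For `1 ≤ s ≤ Δ(j)`, the previous occurrence of `C j` before `j + s` is exactly `s` back. -/
lemma prevDist_add {j : ZMod N} {s : ℕ} (h1 : 0 < s) (h2 : s ≤ cycleDist C j) :
    prevDist C (j + (s : ZMod N)) (C j) = s := by
  have hle : prevDist C (j + (s : ZMod N)) (C j) ≤ s := prevDist_le C h1 (by simp)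
  have hd := prevDist_spec C (i := j + (s : ZMod N)) (a := C j) ⟨j, rfl⟩
  rcases lt_or_eq_of_le hle with hlt | heq
  · exfalso
    set d := prevDist C (j + (s : ZMod N)) (C j) with hdef
    have hcast : j + (s : ZMod N) - (d : ZMod N) = j + ((s - d : ℕ) : ZMod N) := by
      push_cast [Nat.cast_sub hlt.le]
      ring
    have h3 : C (j + ((s - d : ℕ) : ZMod N)) = C j := by rw [← hcast]; exact hd.2
    have h4 : cycleDist C j ≤ s - d := cycleDist_le C (by omega) h3
    omega
  · exact heq

/-- If the previous occurrence of `C j` before `i` is `j` itself, then the distance is ≤ Δ(j). -/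
lemma prevDist_le_cycleDist {i j : ZMod N} (h : i - (prevDist C i (C j) : ZMod N) = j) :
    prevDist C i (C j) ≤ cycleDist C j := by
  by_contra hlt
  push_neg at hlt
  set d := prevDist C i (C j) with hdef
  set Δ := cycleDist C j with hΔ
  have hΔs := cycleDist_spec C j
  have hcast : i - ((d - Δ : ℕ) : ZMod N) = j + (Δ : ZMod N) := by
    rw [← h]
    push_cast [Nat.cast_sub hlt.le]
    ring
  have h3 : C (i - ((d - Δ : ℕ) : ZMod N)) = C j := by rw [hcast]; exact hΔs.2
  have h4 : d ≤ d - Δ := prevDist_le C (by omega) h3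
  omega

end aux

section count
variable {N : ℕ} [NeZero N] {A : Type*} [Fintype A] [DecidableEq A] (C : ZMod N → A)

/-- Claim A: for fixed `j`, the positions `i` whose previous occurrence of `C j` is `j`
are exactly `j+1, …, j+Δ(j)`. -/
lemma card_filter_i (j : ZMod N) :
    (univ.filter fun i : ZMod N => i - (prevDist C i (C j) : ZMod N) = j).card
      = cycleDist C j := by
  rw [show cycleDist C j = (Finset.Icc 1 (cycleDist C j)).card by simp]
  apply Finset.card_bij' (fun i _ => prevDist C i (C j))
    (fun s _ => j + (s : ZMod N))
  · intro i hi
    simp only [mem_filter, mem_univ, true_and] at hi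
    have hd := prevDist_spec C (i := i) (a := C j) ⟨j, rfl⟩
    simp only [Finset.mem_Icc]
    exact ⟨hd.1, prevDist_le_cycleDist C hi⟩
  · intro s hs
    simp only [Finset.mem_Icc] at hs
    simp only [mem_filter, mem_univ, true_and]
    rw [prevDist_add C hs.1 hs.2]
    ring
  · intro i hi
    simp only [mem_filter, mem_univ, true_and] at hi
    set d := prevDist C i (C j) with hd
    rw [← hi]; ring
  · intro s hs
    simp only [Finset.mem_Icc] at hs
    exact prevDist_add C hs.1 hs.2

/-- Claim B: for fixed `i`, there is exactly one valid `j` per attained symbol. -/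
lemma card_filter_j (i : ZMod N) :
    (univ.filter fun j : ZMod N => i - (prevDist C i (C j) : ZMod N) = j).card
      = (univ.image C).card := by
  apply Finset.card_bij' (fun j _ => C j) (fun a _ => i - (prevDist C i a : ZMod N))
  · intro j _
    exact Finset.mem_image_of_mem C (mem_univ j)
  · intro a ha
    simp only [Finset.mem_image, mem_univ, true_and] at ha
    obtain ⟨k, hk⟩ := ha
    have hd := prevDist_spec C (i := i) (a := a) ⟨k, hk⟩
    simp only [mem_filter, mem_univ, true_and]
    rw [hd.2]
  · intro j hj
    simp only [mem_filter, mem_univ, true_and] at hj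
    exact hj
  · intro a ha
    simp only [Finset.mem_image, mem_univ, true_and] at ha
    obtain ⟨k, hk⟩ := ha
    exact (prevDist_spec C (i := i) (a := a) ⟨k, hk⟩).2

lemma total_sum : ∑ j : ZMod N, cycleDist C j = N * (univ.image C).card := by
  calc ∑ j : ZMod N, cycleDist C j
      = ∑ j : ZMod N,
          (univ.filter fun i : ZMod N => i - (prevDist C i (C j) : ZMod N) = j).card := by
        simp_rw [card_filter_i]
    _ = ∑ j : ZMod N, ∑ i : ZMod N,
          if i - (prevDist C i (C j) : ZMod N) = j then 1 else 0 :=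
        Finset.sum_congr rfl fun j _ => Finset.card_filter _ _
    _ = ∑ i : ZMod N, ∑ j : ZMod N,
          if i - (prevDist C i (C j) : ZMod N) = j then 1 else 0 := Finset.sum_comm
    _ = ∑ i : ZMod N,
          (univ.filter fun j : ZMod N => i - (prevDist C i (C j) : ZMod N) = j).card :=
        Finset.sum_congr rfl fun i _ => (Finset.card_filter _ _).symm
    _ = ∑ _i : ZMod N, (univ.image C).card := by simp_rw [card_filter_j]
    _ = N * (univ.image C).card := by
        rw [Finset.sum_const, Finset.card_univ, ZMod.card, smul_eq_mul]

end count


/-- Round trip lemma, part 2: the total of all distances is `N` times the number of distinct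
symbols attained; equivalently the mean equals the number of distinct symbols. -/
theorem round_trip_part2 {N : ℕ} [NeZero N] {A : Type*} [Fintype A] [DecidableEq A]
    (C : ZMod N → A) :
    (∑ j : ZMod N, cycleDist C j = N * (Finset.univ.image C).card) ∧
    cycleMean C = ((Finset.univ.image C).card : ℚ) := by
  have h := total_sum C
  refine ⟨h, ?_⟩
  have hN : (N : ℚ) ≠ 0 := Nat.cast_ne_zero.mpr (NeZero.ne N)
  unfold cycleMean
  rw [← Nat.cast_sum, h]
  push_cast
  rw [mul_comm, mul_div_assoc, div_self hN, mul_one]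
end

section
/- (Existence of a binary cycle with the less abundant symbol unclustered) Let m₁ ≥ m₂ ≥ 1 be natural numbers and N = m₁ + m₂. Then there exists an admissible cycle C : ZMod N → {a₁, a₂} with fibers of sizes m₁ and m₂ such that every instance of the less abundant symbol a₂ is unclustered, i.e., Δ_C(j) ≥ 2 for every position j with C(j) = a₂. -/
open Finset

/-- Existence of an admissible binary cycle in which every instance of the less abundant
symbol `a₂` is unclustered. -/
theorem exists_unclustered_binary (m₁ m₂ : ℕ) (h2 : 1 ≤ m₂) (h12 : m₂ ≤ m₁)
    (N : ℕ) (hN : N = m₁ + m₂) [NeZero N] :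
    ∃ C : ZMod N → Fin 2, Admissible ![m₁, m₂] C ∧
      ∀ j : ZMod N, C j = 1 → 2 ≤ cycleDist C j := by
  have hNpos : 0 < N := Nat.pos_of_ne_zero (NeZero.ne N)
  have h2m : 2 * m₂ ≤ N := by omega
  set C : ZMod N → Fin 2 :=
    fun j => if j.val % 2 = 0 ∧ j.val < 2 * m₂ then 1 else 0 with hC
  have hCone : ∀ j : ZMod N, C j = 1 ↔ (j.val % 2 = 0 ∧ j.val < 2 * m₂) := by
    intro j
    by_cases h : j.val % 2 = 0 ∧ j.val < 2 * m₂ <;> simp [hC, h]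
  -- card of fiber 1
  have hcard1 : (Finset.univ.filter (fun j : ZMod N => C j = 1)).card = m₂ := by
    rw [show m₂ = (Finset.range m₂).card from (Finset.card_range m₂).symm]
    apply Finset.card_nbij' (fun j => j.val / 2) (fun k => ((2 * k : ℕ) : ZMod N))
    · intro j hj
      simp only [Finset.mem_coe, Finset.mem_filter, Finset.mem_univ, true_and] at hj
      rw [hCone] at hj
      simp only [Finset.mem_coe, Finset.mem_range]
      omega
    · intro k hk
      simp only [Finset.mem_coe, Finset.mem_range] at hk
      have hlt : 2 * k < N := by omega
      have hv : ((2 * k : ℕ) : ZMod N).val = 2 * k := ZMod.val_cast_of_lt hlt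
      simp only [Finset.mem_coe, Finset.mem_filter, Finset.mem_univ, true_and]
      rw [hCone, hv]
      omega
    · intro j hj
      simp only [Finset.mem_coe, Finset.mem_filter, Finset.mem_univ, true_and] at hj
      rw [hCone] at hj
      have : 2 * (j.val / 2) = j.val := by omega
      beta_reduce
      rw [this]
      exact ZMod.natCast_rightInverse j
    · intro k hk
      simp only [Finset.mem_coe, Finset.mem_range] at hk
      have hlt : 2 * k < N := by omega
      beta_reduce
      rw [ZMod.val_cast_of_lt hlt]
      omega
  refine ⟨C, ?_, ?_⟩
  · intro a
    have hcard0 : (Finset.univ.filter (fun j : ZMod N => C j = 0)).card = m₁ := by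
      have hnot : (Finset.univ.filter (fun j : ZMod N => C j = 0)) =
          (Finset.univ.filter (fun j : ZMod N => ¬ C j = 1)) := by
        apply Finset.filter_congr
        intro j _
        constructor
        · intro h h1; rw [h] at h1; exact absurd h1 (by decide)
        · intro h
          have h1 : (C j).val ≠ 1 := fun hh => h (Fin.ext hh)
          have hv := (C j).isLt
          apply Fin.ext
          simp only [Fin.val_zero]
          omega
      rw [hnot, Finset.filter_not, Finset.card_sdiff_of_subset (Finset.filter_subset _ _), hcard1]
      have : (Finset.univ : Finset (ZMod N)).card = N := by
        rw [Finset.card_univ, ZMod.card]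
      omega
    fin_cases a
    · simpa using hcard0
    · simpa using hcard1
  · intro j hj
    have hne : {d : ℕ | 0 < d ∧ C (j + (d : ZMod N)) = C j}.Nonempty := by
      refine ⟨N, hNpos, ?_⟩
      simp [ZMod.natCast_self]
    have hmem := Nat.sInf_mem hne
    have hEq : cycleDist C j = sInf {d : ℕ | 0 < d ∧ C (j + (d : ZMod N)) = C j} := rfl
    have h1notin : (1 : ℕ) ∉ {d : ℕ | 0 < d ∧ C (j + (d : ZMod N)) = C j} := by
      rintro ⟨-, hdC⟩
      rw [hj, hCone] at hdC
      rw [hCone] at hj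
      obtain ⟨heven, hlt⟩ := hj
      have hval1 : (j + 1).val = j.val + 1 := by
        have h1 : j.val + 1 < N := by omega
        have : (j + 1 : ZMod N) = ((j.val + 1 : ℕ) : ZMod N) := by
          push_cast
          rw [ZMod.natCast_rightInverse j]
        rw [this, ZMod.val_cast_of_lt h1]
      rw [show ((1 : ℕ) : ZMod N) = 1 from Nat.cast_one, hval1] at hdC
      omega
    obtain ⟨hdpos, -⟩ := hmem
    rw [hEq]
    have hd2 : sInf {d : ℕ | 0 < d ∧ C (j + (d : ZMod N)) = C j} ≠ 1 := by
      intro h; exact h1notin (h ▸ Nat.sInf_mem hne)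
    omega
end

section
/- (Distance profile of the more abundant symbol when the less abundant one is unclustered) Let m₁ ≥ m₂ ≥ 1 be natural numbers, N = m₁ + m₂, and let C : ZMod N → {a₁, a₂} be an admissible cycle with fibers of sizes m₁ (for a₁) and m₂ (for a₂). If every instance of a₂ is unclustered (Δ_C(j) ≥ 2 whenever C(j) = a₂), then every instance of a₁ has distance 1 or 2, and exactly m₁ − m₂ instances of a₁ have Δ_C(j) = 1 while exactly m₂ instances of a₁ have Δ_C(j) = 2. -/
open Finset

section Aux
variable {N : ℕ} [NeZero N] {A : Type*} (C : ZMod N → A) (j : ZMod N)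

lemma natN_mem_distSet : N ∈ {d : ℕ | 0 < d ∧ C (j + (d : ZMod N)) = C j} :=
  ⟨Nat.pos_of_ne_zero (NeZero.ne N), by simp [ZMod.natCast_self]⟩

lemma cycleDist_mem : 0 < cycleDist C j ∧ C (j + (cycleDist C j : ZMod N)) = C j :=
  Nat.sInf_mem ⟨N, natN_mem_distSet C j⟩

lemma cycleDist_eq_one_iff : cycleDist C j = 1 ↔ C (j + 1) = C j := by
  constructor
  · intro h
    have := cycleDist_mem C j
    rw [h] at this
    simpa using this.2
  · intro h
    have h1 : cycleDist C j ≤ 1 := Nat.sInf_le ⟨one_pos, by simpa using h⟩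
    have h2 := (cycleDist_mem C j).1
    omega

lemma cycleDist_eq_two (h1 : C (j + 1) ≠ C j) (h2 : C (j + 2) = C j) :
    cycleDist C j = 2 := by
  have hle : cycleDist C j ≤ 2 := Nat.sInf_le ⟨two_pos, by simpa using h2⟩
  have hpos := (cycleDist_mem C j).1
  have hne : cycleDist C j ≠ 1 := fun h => h1 ((cycleDist_eq_one_iff C j).mp h)
  omega

end Aux

/-- If the less abundant symbol `a₂` is unclustered in an admissible binary cycle, then every
instance of `a₁` has distance 1 or 2, with exactly `m₁ − m₂` instances at distance 1 and
exactly `m₂` instances at distance 2. -/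
theorem more_abundant_profile (m₁ m₂ : ℕ) (h2 : 1 ≤ m₂) (h12 : m₂ ≤ m₁)
    (N : ℕ) (hN : N = m₁ + m₂) [NeZero N]
    (C : ZMod N → Fin 2) (hC : Admissible ![m₁, m₂] C)
    (hunc : ∀ j : ZMod N, C j = 1 → 2 ≤ cycleDist C j) :
    (∀ j : ZMod N, C j = 0 → cycleDist C j = 1 ∨ cycleDist C j = 2) ∧
    (Finset.univ.filter (fun j => C j = 0 ∧ cycleDist C j = 1)).card = m₁ - m₂ ∧
    (Finset.univ.filter (fun j => C j = 0 ∧ cycleDist C j = 2)).card = m₂ := by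
  classical
  have hfin : ∀ x : Fin 2, x = 0 ∨ x = 1 := by decide
  have key : ∀ j : ZMod N, C j = 1 → C (j + 1) = 0 := by
    intro j hj
    have h := hunc j hj
    have hne : C (j + 1) ≠ C j := by
      intro h1
      have := (cycleDist_eq_one_iff C j).mpr h1
      omega
    rcases hfin (C (j + 1)) with h0 | h1
    · exact h0
    · exact absurd (h1.trans hj.symm) hne
  have char2 : ∀ j : ZMod N, C j = 0 → (cycleDist C j = 2 ↔ C (j + 1) = 1) := by
    intro j hj
    constructor
    · intro h
      rcases hfin (C (j + 1)) with h0 | h1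
      · have := (cycleDist_eq_one_iff C j).mpr (h0.trans hj.symm); omega
      · exact h1
    · intro h1
      apply cycleDist_eq_two
      · rw [h1, hj]; decide
      · have h2 : C (j + 2) = 0 := by
          have := key (j + 1) h1
          rwa [show j + 1 + 1 = j + 2 from by ring] at this
        rw [hj, h2]
  have part1 : ∀ j : ZMod N, C j = 0 → cycleDist C j = 1 ∨ cycleDist C j = 2 := by
    intro j hj
    rcases hfin (C (j + 1)) with h0 | h1
    · exact Or.inl ((cycleDist_eq_one_iff C j).mpr (h0.trans hj.symm))
    · exact Or.inr ((char2 j hj).mpr h1)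
  have hm1 : (Finset.univ.filter (fun j => C j = 0)).card = m₁ := by
    simpa using hC 0
  have hm2 : (Finset.univ.filter (fun k => C k = 1)).card = m₂ := by
    simpa using hC 1
  have hS2 : (Finset.univ.filter (fun j => C j = 0 ∧ cycleDist C j = 2)).card
      = (Finset.univ.filter (fun k => C k = 1)).card := by
    apply Finset.card_bij (fun j _ => j + 1)
    · intro j hj
      simp only [Finset.mem_filter, Finset.mem_univ, true_and] at *
      exact (char2 j hj.1).mp hj.2
    · intro a _ b _ h
      exact add_right_cancel h
    · intro k hk
      simp only [Finset.mem_filter, Finset.mem_univ, true_and] at hk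
      have hk0 : C (k - 1) = 0 := by
        rcases hfin (C (k - 1)) with h0 | h1
        · exact h0
        · have := key (k - 1) h1
          rw [show k - 1 + 1 = k from by ring] at this
          rw [this] at hk
          exact absurd hk (by decide)
      refine ⟨k - 1, ?_, by ring⟩
      simp only [Finset.mem_filter, Finset.mem_univ, true_and]
      refine ⟨hk0, (char2 _ hk0).mpr ?_⟩
      rwa [show k - 1 + 1 = k from by ring]
  have heq : Finset.univ.filter (fun j => C j = 0 ∧ ¬ cycleDist C j = 1)
      = Finset.univ.filter (fun j => C j = 0 ∧ cycleDist C j = 2) := by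
    ext j
    simp only [Finset.mem_filter, Finset.mem_univ, true_and]
    constructor
    · rintro ⟨h0, hne⟩
      exact ⟨h0, (part1 j h0).resolve_left hne⟩
    · rintro ⟨h0, h2⟩
      exact ⟨h0, by omega⟩
  have hsplit := Finset.card_filter_add_card_filter_not
    (s := Finset.univ.filter (fun j : ZMod N => C j = 0))
    (p := fun j => cycleDist C j = 1)
  rw [Finset.filter_filter, Finset.filter_filter, heq, hS2, hm2, hm1] at hsplit
  exact ⟨part1, by omega, hS2.trans hm2⟩
end
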